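/- Let q be a prime power, let K be a finite field with q elements, let L be a field extension of K of degree n, let d be a divisor of n, and let b be a positive divisor of q^n − 1. Then #{ β ∈ Lˣ : [K(β) : K] = d and β^{(q^n−1)/b} = 1 } = Σ_{c | d} μ̂(d/c) · (q^n − 1) / lcm( (q^n − 1)/(q^c − 1), b ), where μ̂ is the Möbius function and the lcm is computed in the integers. -/

import Mathlib

private lemma aux_div_dvd_div {a b N : ℕ} (hN : N ≠ 0) (hab : a ∣ b) (hbN : b ∣ N) :
    N / b ∣ N / a := by
  have hb : 0 < b := Nat.pos_of_dvd_of_pos hbN (Nat.pos_of_ne_zero hN)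
  refine ⟨b / a, ?_⟩
  rw [Nat.div_mul_div_comm hbN hab, Nat.mul_comm b a, Nat.mul_div_mul_right _ _ hb]

private lemma aux_lcm_div {x y N : ℕ} (hN : 0 < N) (hx : x ∣ N) (hy : y ∣ N) :
    Nat.lcm (N / x) (N / y) = N / Nat.gcd x y := by
  have hg : Nat.gcd x y ∣ N := (Nat.gcd_dvd_left x y).trans hx
  apply Nat.dvd_antisymm
  · exact Nat.lcm_dvd (aux_div_dvd_div hN.ne' (Nat.gcd_dvd_left x y) hx)
      (aux_div_dvd_div hN.ne' (Nat.gcd_dvd_right x y) hy)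
  · have hlcmN : Nat.lcm (N / x) (N / y) ∣ N :=
      Nat.lcm_dvd (Nat.div_dvd_of_dvd hx) (Nat.div_dvd_of_dvd hy)
    set L := Nat.lcm (N / x) (N / y) with hL
    have hzx : N / L ∣ x := by
      have := aux_div_dvd_div hN.ne' (Nat.dvd_lcm_left (N / x) (N / y)) hlcmN
      rwa [Nat.div_div_self hx hN.ne'] at this
    have hzy : N / L ∣ y := by
      have := aux_div_dvd_div hN.ne' (Nat.dvd_lcm_right (N / x) (N / y)) hlcmN
      rwa [Nat.div_div_self hy hN.ne'] at this
    have hzg : N / L ∣ Nat.gcd x y := Nat.dvd_gcd hzx hzy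
    have h2 := aux_div_dvd_div hN.ne' hzg hg
    rwa [Nat.div_div_self hlcmN hN.ne'] at h2

private lemma aux_gcd_mul_lcm {x b N : ℕ} (hN : 0 < N) (hx : x ∣ N) (hb : b ∣ N) :
    Nat.gcd x (N / b) * Nat.lcm (N / x) b = N := by
  have h1 : N / (N / b) = b := Nat.div_div_self hb hN.ne'
  have h2 := aux_lcm_div hN hx (Nat.div_dvd_of_dvd hb)
  rw [h1] at h2
  rw [h2, Nat.mul_div_cancel' ((Nat.gcd_dvd_left _ _).trans hx)]

private lemma aux_card_pow_eq_one (L : Type) [Field L] [Fintype L] [DecidableEq L] {m : ℕ}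
    (hm : m ∣ Fintype.card Lˣ) :
    (Finset.univ.filter (fun x : Lˣ => x ^ m = 1)).card = m := by
  classical
  have hN : 0 < Fintype.card Lˣ := Fintype.card_pos
  have hm0 : 0 < m := Nat.pos_of_dvd_of_pos hm hN
  apply le_antisymm (IsCyclic.card_pow_eq_one_le hm0)
  obtain ⟨g, hg⟩ := IsCyclic.exists_generator (α := Lˣ)
  have hog : orderOf g = Fintype.card Lˣ := by
    rw [orderOf_eq_card_of_forall_mem_zpowers hg, Nat.card_eq_fintype_card]
  set ζ := g ^ (Fintype.card Lˣ / m) with hζ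
  have hoζ : orderOf ζ = m := by
    rw [hζ, orderOf_pow, hog, Nat.gcd_eq_right (Nat.div_dvd_of_dvd hm),
      Nat.div_div_self hm hN.ne']
  have hsub : ((Subgroup.zpowers ζ : Subgroup Lˣ) : Set Lˣ).toFinset ⊆
      Finset.univ.filter (fun x : Lˣ => x ^ m = 1) := by
    intro x hx
    rw [Set.mem_toFinset] at hx
    obtain ⟨k, hk⟩ := hx
    simp only [Finset.mem_filter, Finset.mem_univ, true_and]
    rw [← hk, ← zpow_natCast (ζ ^ k) m, ← zpow_mul, mul_comm, zpow_mul, zpow_natCast,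
      ← hoζ, pow_orderOf_eq_one, one_zpow]
  have hcard : ((Subgroup.zpowers ζ : Subgroup Lˣ) : Set Lˣ).toFinset.card = m := by
    rw [Set.toFinset_card, ← hoζ]
    exact Fintype.card_zpowers
  calc m = ((Subgroup.zpowers ζ : Subgroup Lˣ) : Set Lˣ).toFinset.card := hcard.symm
    _ ≤ _ := Finset.card_le_card hsub

private lemma finrank_adjoin_dvd_iff
    (K L : Type) [Field K] [Fintype K] [Field L] [Fintype L] [Algebra K L]
    (β : Lˣ) (c : ℕ) :
    Module.finrank K (IntermediateField.adjoin K {(β : L)}) ∣ c ↔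
      β ^ (Fintype.card K ^ c - 1) = 1 := by
  classical
  have hq1 : 1 < Fintype.card K := Fintype.one_lt_card
  set q := Fintype.card K with hqdef
  set F := IntermediateField.adjoin K {(β : L)} with hF
  letI : Fintype F := Fintype.ofFinite F
  set e := Module.finrank K F with he
  have hcard : Fintype.card F = q ^ e := Module.card_eq_pow_finrank
  -- unit pow characterization
  have key : ∀ m : ℕ, (β : L) ^ (q ^ m) = (β : L) ↔ β ^ (q ^ m - 1) = 1 := by
    intro m
    have hqm : q ^ m - 1 + 1 = q ^ m := Nat.succ_pred_eq_of_pos (pow_pos (by omega) m)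
    constructor
    · intro h
      have hu : β ^ (q ^ m) = β := Units.ext (by rw [Units.val_pow_eq_pow_val]; exact h)
      have := hu
      rw [← hqm, pow_succ] at this
      exact mul_eq_right.mp this
    · intro h
      have hu : β ^ (q ^ m) = β := by
        rw [← hqm, pow_succ, h, one_mul]
      rw [← Units.val_pow_eq_pow_val, hu]
  -- β^(q^e - 1) = 1
  have hβe : β ^ (q ^ e - 1) = 1 := by
    have hx := FiniteField.pow_card (⟨(β : L), IntermediateField.mem_adjoin_simple_self K (β : L)⟩ : F)
    rw [hcard] at hx
    have : (β : L) ^ (q ^ e) = (β : L) := by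
      have := congrArg (Subtype.val) hx
      simpa using this
    exact (key e).mp this
  set t := orderOf β with ht
  have ht0 : 0 < t := orderOf_pos β
  have hchar : ∀ m : ℕ, β ^ (q ^ m - 1) = 1 ↔ (q : ZMod t) ^ m = 1 := by
    intro m
    have h1 : β ^ (q ^ m - 1) = 1 ↔ t ∣ q ^ m - 1 := orderOf_dvd_iff_pow_eq_one.symm
    have h2 : t ∣ q ^ m - 1 ↔ 1 ≡ q ^ m [MOD t] :=
      (Nat.modEq_iff_dvd' (Nat.one_le_pow m q (by omega))).symm
    have h3 : 1 ≡ q ^ m [MOD t] ↔ ((1 : ℕ) : ZMod t) = ((q ^ m : ℕ) : ZMod t) :=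
      (ZMod.natCast_eq_natCast_iff _ _ _).symm
    rw [h1, h2, h3]
    push_cast
    exact eq_comm
  set r := orderOf ((q : ZMod t)) with hr
  have hre : r ∣ e := orderOf_dvd_iff_pow_eq_one.mpr ((hchar e).mp hβe)
  have he0 : 0 < e := by
    rcases Nat.eq_zero_or_pos e with h | h
    · exfalso
      have : Fintype.card F = 1 := by rw [hcard, h, pow_zero]
      exact (Fintype.one_lt_card (α := F)).ne' this
    · exact h
  have hr0 : 0 < r := Nat.pos_of_dvd_of_pos hre he0
  have hβr : β ^ (q ^ r - 1) = 1 := (hchar r).mpr (pow_orderOf_eq_one _)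
  have hβrL : (β : L) ^ (q ^ r) = (β : L) := by
    have := (key r).mpr hβr
    exact this
  -- every element of F is fixed by x ↦ x^(q^r)
  have hfrob : ∀ x : L, x ∈ F → x ^ (q ^ r) = x := by
    set p := ringChar K with hp
    haveI : CharP K p := ringChar.charP K
    have hpprime : p.Prime := CharP.char_is_prime K p
    haveI : Fact p.Prime := ⟨hpprime⟩
    haveI : CharP L p := charP_of_injective_algebraMap (algebraMap K L).injective p
    obtain ⟨s, -, hs⟩ := FiniteField.card K p
    have hq_pow : q ^ r = p ^ ((s : ℕ) * r) := by rw [hqdef, hs, ← pow_mul]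
    intro x hx
    refine IntermediateField.adjoin_induction K
      (fun y hy => ?_) (fun a => ?_) (fun u v hu' hv' hu hv => ?_)
      (fun u hu' hu => ?_) (fun u v hu' hv' hu hv => ?_) hx
    · rw [Set.mem_singleton_iff] at hy
      rw [hy]; exact hβrL
    · rw [← map_pow, FiniteField.pow_card_pow]
    · rw [hq_pow] at hu hv ⊢
      rw [add_pow_char_pow, hu, hv]
    · rw [inv_pow, hu]
    · rw [mul_pow, hu, hv]
  -- cardinality bound : e ≤ r
  have hle : e ≤ r := by
    have hqr1 : 1 < q ^ r := Nat.one_lt_pow hr0.ne' hq1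
    set f : Polynomial L := Polynomial.X ^ (q ^ r) - Polynomial.X with hfdef
    have hfne : f ≠ 0 := FiniteField.X_pow_card_sub_X_ne_zero L hqr1
    have hmem : ∀ x : F, (x : L) ∈ f.roots.toFinset := by
      intro x
      rw [Multiset.mem_toFinset, Polynomial.mem_roots hfne]
      simp only [hfdef, Polynomial.IsRoot, Polynomial.eval_sub, Polynomial.eval_pow,
        Polynomial.eval_X]
      rw [hfrob (x : L) x.2, sub_self]
    have hinj : Function.Injective (fun x : F => (⟨(x : L), hmem x⟩ : {y // y ∈ f.roots.toFinset})) := by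
      intro a b hab
      have h2 : (a : L) = (b : L) := by simpa using hab
      exact Subtype.ext h2
    have hbound : Fintype.card F ≤ q ^ r := by
      calc Fintype.card F ≤ Fintype.card {y // y ∈ f.roots.toFinset} :=
            Fintype.card_le_of_injective _ hinj
        _ = f.roots.toFinset.card := Fintype.card_coe _
        _ ≤ Multiset.card f.roots := Multiset.toFinset_card_le _
        _ ≤ f.natDegree := Polynomial.card_roots' f
        _ = q ^ r := FiniteField.X_pow_card_sub_X_natDegree_eq L hqr1
    rw [hcard] at hbound
    exact (Nat.pow_le_pow_iff_right hq1).mp hbound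
  have her : e = r := Nat.le_antisymm hle (Nat.le_of_dvd he0 hre)
  rw [her]
  exact Iff.trans orderOf_dvd_iff_pow_eq_one (hchar c).symm

/-- Lemma 4.7 of the paper (element-level form): for a finite field `K` with `q` elements, a
degree-`n` extension `L/K`, a divisor `d` of `n` and a positive divisor `b` of `q^n - 1`,
the number of `β ∈ Lˣ` with `[K(β):K] = d` lying in the subgroup of index `b` of `Lˣ` is
`Σ_{c ∣ d} μ̂(d/c)·(q^n - 1)/lcm((q^n - 1)/(q^c - 1), b)`. -/
theorem count_degree_d_elements_in_subgroup
    (n d b : ℕ) (hn : 1 ≤ n) (K L : Type) [Field K] [Fintype K] [Field L] [Fintype L]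
    [Algebra K L] (hdim : Module.finrank K L = n) (hd : d ∣ n)
    (hb : 0 < b) (hbdvd : b ∣ Fintype.card K ^ n - 1) :
    (Nat.card {β : Lˣ //
        Module.finrank K (IntermediateField.adjoin K {(β : L)}) = d ∧
        β ^ ((Fintype.card K ^ n - 1) / b) = 1} : ℚ)
      = ∑ c ∈ d.divisors,
          ((ArithmeticFunction.moebius (d / c)) : ℚ) * ((Fintype.card K ^ n - 1 : ℕ) : ℚ) /
            ((Nat.lcm ((Fintype.card K ^ n - 1) / (Fintype.card K ^ c - 1)) b : ℕ) : ℚ) := by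
  classical
  have hq1 : 1 < Fintype.card K := Fintype.one_lt_card
  set q := Fintype.card K with hqdef
  set N := q ^ n - 1 with hNdef
  have hcardL : Fintype.card L = q ^ n := by
    rw [Module.card_eq_pow_finrank (K := K) (V := L), hdim]
  have hcardLx : Fintype.card Lˣ = N := by
    rw [Fintype.card_units, hcardL]
  have hqn1 : 1 < q ^ n := Nat.one_lt_pow (by omega) hq1
  have hN0 : 0 < N := by omega
  have hNbdvd : N / b ∣ N := Nat.div_dvd_of_dvd hbdvd
  have hd0 : 0 < d := Nat.pos_of_dvd_of_pos hd hn
  set f : ℕ → ℚ := fun c => (Nat.card {β : Lˣ //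
      Module.finrank K (IntermediateField.adjoin K {(β : L)}) = c ∧
      β ^ (N / b) = 1} : ℚ) with hf
  set g : ℕ → ℚ := fun c => ((Nat.gcd (Nat.gcd (q ^ c - 1) (N / b)) N : ℕ) : ℚ) with hg
  -- key summation identity
  have hsum : ∀ c > 0, ∑ i ∈ c.divisors, f i = g c := by
    intro c hc
    have hpt : ∀ β : Lˣ,
        (Module.finrank K (IntermediateField.adjoin K {(β : L)}) ∣ c ∧ β ^ (N / b) = 1) ↔
        β ^ (Nat.gcd (Nat.gcd (q ^ c - 1) (N / b)) N) = 1 := by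
      intro β
      rw [finrank_adjoin_dvd_iff K L β c]
      rw [← orderOf_dvd_iff_pow_eq_one (n := q ^ c - 1),
        ← orderOf_dvd_iff_pow_eq_one (n := N / b),
        ← orderOf_dvd_iff_pow_eq_one (n := Nat.gcd (Nat.gcd (q ^ c - 1) (N / b)) N)]
      rw [Nat.dvd_gcd_iff, Nat.dvd_gcd_iff]
      constructor
      · rintro ⟨h1, h2⟩
        exact ⟨⟨h1, h2⟩, orderOf_dvd_iff_pow_eq_one.mpr (by
          rw [← hcardLx]; exact pow_card_eq_one)⟩
      · rintro ⟨⟨h1, h2⟩, -⟩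
        exact ⟨h1, h2⟩
    set A := Finset.univ.filter
      (fun β : Lˣ => Module.finrank K (IntermediateField.adjoin K {(β : L)}) ∣ c ∧
        β ^ (N / b) = 1) with hA
    have hAcard : A.card = Nat.gcd (Nat.gcd (q ^ c - 1) (N / b)) N := by
      have : A = Finset.univ.filter
          (fun β : Lˣ => β ^ (Nat.gcd (Nat.gcd (q ^ c - 1) (N / b)) N) = 1) := by
        apply Finset.filter_congr
        intro β _
        exact hpt β
      rw [this]
      rw [aux_card_pow_eq_one L]
      rw [hcardLx]
      exact Nat.gcd_dvd_right _ _
    have hfib : A.card = ∑ i ∈ c.divisors,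
        (A.filter (fun β : Lˣ =>
          Module.finrank K (IntermediateField.adjoin K {(β : L)}) = i)).card := by
      apply Finset.card_eq_sum_card_fiberwise
      intro β hβ
      simp only [hA, Finset.mem_coe, Finset.mem_filter] at hβ ⊢
      exact Nat.mem_divisors.mpr ⟨hβ.2.1, hc.ne'⟩
    have hfiber : ∀ i ∈ c.divisors,
        (A.filter (fun β : Lˣ =>
          Module.finrank K (IntermediateField.adjoin K {(β : L)}) = i)).card
        = Nat.card {β : Lˣ //
            Module.finrank K (IntermediateField.adjoin K {(β : L)}) = i ∧
            β ^ (N / b) = 1} := by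
      intro i hi
      rw [Nat.card_eq_fintype_card, Fintype.card_subtype]
      congr 1
      ext β
      rw [hA, Finset.filter_filter, Finset.mem_filter, Finset.mem_filter]
      constructor
      · rintro ⟨h1, ⟨h2, h3⟩, h4⟩
        exact ⟨h1, h4, h3⟩
      · rintro ⟨h1, h2, h3⟩
        exact ⟨h1, ⟨h2 ▸ (Nat.mem_divisors.mp hi).1, h3⟩, h2⟩
    show ∑ i ∈ c.divisors, f i = ((Nat.gcd (Nat.gcd (q ^ c - 1) (N / b)) N : ℕ) : ℚ)
    rw [← hAcard, hfib]
    push_cast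
    apply Finset.sum_congr rfl
    intro i hi
    rw [hf, hfiber i hi]
  have hmob := (ArithmeticFunction.sum_eq_iff_sum_mul_moebius_eq (R := ℚ)
    (f := f) (g := g)).mp hsum d hd0
  have hgoalL : (Nat.card {β : Lˣ //
      Module.finrank K (IntermediateField.adjoin K {(β : L)}) = d ∧
      β ^ (N / b) = 1} : ℚ) = f d := rfl
  rw [hgoalL, ← hmob,
    Nat.sum_divisorsAntidiagonal' (f := fun x y => ((ArithmeticFunction.moebius x : ℤ) : ℚ) * g y)]
  apply Finset.sum_congr rfl
  intro c hc
  have hcd : c ∣ d := (Nat.mem_divisors.mp hc).1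
  have hcn : c ∣ n := hcd.trans hd
  have hxc : q ^ c - 1 ∣ N := by
    obtain ⟨k, hk⟩ := hcn
    have := Nat.sub_dvd_pow_sub_pow (q ^ c) 1 k
    rwa [← pow_mul, one_pow, ← hk] at this
  have hc0 : 0 < c := Nat.pos_of_dvd_of_pos hcd hd0
  have hqc1 : 0 < q ^ c - 1 := by
    have : 1 < q ^ c := Nat.one_lt_pow hc0.ne' hq1
    omega
  have hg2 : Nat.gcd (q ^ c - 1) (N / b) ∣ N := (Nat.gcd_dvd_left _ _).trans hxc
  have hmul : Nat.gcd (q ^ c - 1) (N / b) * Nat.lcm (N / (q ^ c - 1)) b = N :=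
    aux_gcd_mul_lcm hN0 hxc hbdvd
  have hlcm0 : (Nat.lcm (N / (q ^ c - 1)) b : ℚ) ≠ 0 := by
    have : Nat.lcm (N / (q ^ c - 1)) b ≠ 0 := by
      intro h; rw [h, Nat.mul_zero] at hmul; omega
    exact_mod_cast this
  have hgc : g c = (N : ℚ) / (Nat.lcm (N / (q ^ c - 1)) b : ℚ) := by
    rw [hg]
    simp only [Nat.gcd_eq_left hg2]
    rw [eq_div_iff hlcm0]
    exact_mod_cast hmul
  rw [hgc, mul_div_assoc]
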